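/- For every real c > 0 and every x ∈ ℝ, the absolutely convergent series Σ_{m∈ℤ} e^{−c·m²} · cos(2π·m·x) is strictly positive. -/

import Mathlib

open Real

/-- Positivity of the periodized Gaussian (theta-type sum): for every `c > 0` and
`x ∈ ℝ`, `Σ_{m∈ℤ} e^{−c m²} cos(2πmx) > 0`. -/
theorem stmt_6 (c : ℝ) (hc : 0 < c) (x : ℝ) :
    0 < ∑' m : ℤ, Real.exp (-c * (m : ℝ) ^ 2) * Real.cos (2 * π * (m : ℝ) * x) := by
  have hπ : (0:ℝ) < π := Real.pi_pos
  have hπ0 : (π:ℂ) ≠ 0 := by exact_mod_cast hπ.ne'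
  have hc0 : (c:ℂ) ≠ 0 := by exact_mod_cast hc.ne'
  -- the complex summand
  set F : ℤ → ℂ := fun n => Complex.exp (((-c * (n:ℝ)^2 : ℝ) : ℂ) + ((2*π*(n:ℝ)*x : ℝ) : ℂ) * Complex.I) with hF
  -- summability of F
  have hFsum : Summable F := by
    have h1 : Summable (fun n : ℤ => jacobiTheta₂_term n (x:ℂ) (Complex.I * (c/π))) := by
      apply (summable_jacobiTheta₂_term_iff _ _).mpr
      simp [Complex.mul_im, div_pos hc hπ]
    refine h1.congr fun n => ?_
    rw [jacobiTheta₂_term, hF]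
    congr 1
    push_cast
    field_simp
    linear_combination ((n:ℂ)^2 * (c:ℂ)) * Complex.I_sq
  -- the shifted Gaussian
  set g : ℤ → ℝ := fun n => Real.exp (-(π^2/c) * ((n:ℝ) - x)^2) with hg
  have hgsum : Summable g := by
    rw [← Complex.summable_ofReal]
    have h1 : Summable (fun n : ℤ => Complex.exp (-(π:ℂ)^2 * x^2 / c) *
        jacobiTheta₂_term n (-Complex.I * π * x / c) (Complex.I * (π/c))) := by
      apply Summable.mul_left
      apply (summable_jacobiTheta₂_term_iff _ _).mpr
      simp [Complex.mul_im, div_pos hπ hc]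
    refine h1.congr fun n => ?_
    rw [jacobiTheta₂_term, ← Complex.exp_add, hg]
    push_cast [Complex.ofReal_exp]
    congr 1
    field_simp
    ring_nf
    linear_combination ((n:ℂ)^2 - 2*(x:ℂ)*(n:ℂ)) * Complex.I_sq
  -- Poisson summation / theta transformation
  have ha : 0 < ((c / π : ℝ) : ℂ).re := by simpa using div_pos hc hπ
  have key := Complex.tsum_exp_neg_quadratic ha (Complex.I * x)
  have keyL : (fun n : ℤ => Complex.exp (-↑π * ((c/π : ℝ):ℂ) * (n:ℂ)^2 + 2*↑π*(Complex.I*↑x)*(n:ℂ))) = F := by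
    funext n
    rw [hF]
    congr 1
    push_cast
    field_simp
  have keyR : (fun n : ℤ => Complex.exp (-↑π / ((c/π : ℝ):ℂ) * ((n:ℂ) + Complex.I*(Complex.I*↑x))^2))
      = fun n => ((g n : ℝ) : ℂ) := by
    funext n
    show _ = ((Real.exp (-(π^2/c) * ((n:ℝ) - x)^2) : ℝ) : ℂ)
    rw [Complex.ofReal_exp]
    congr 1
    push_cast
    field_simp [hc0]
    linear_combination (-2*(n:ℂ)*(x:ℂ) + (x:ℂ)^2*(1 - Complex.I^2)) * Complex.I_sq
  have hpow : ((c/π : ℝ):ℂ) ^ (1/2 : ℂ) = ((Real.sqrt (c/π) : ℝ) : ℂ) := by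
    rw [Real.sqrt_eq_rpow, Complex.ofReal_cpow (div_pos hc hπ).le]
    norm_num
  rw [keyL, keyR, hpow] at key
  set r : ℝ := 1 / Real.sqrt (c/π) * ∑' n, g n with hr
  have hTr : (∑' n, F n) = (r : ℂ) := by
    rw [key, hr]
    push_cast [Complex.ofReal_tsum]
    ring
  have hre : ∀ n : ℤ, (F n).re = Real.exp (-c * (n:ℝ)^2) * Real.cos (2*π*(n:ℝ)*x) := by
    intro n
    simp only [hF, Complex.exp_add, Complex.mul_re, Complex.exp_ofReal_re,
      Complex.exp_ofReal_im, Complex.exp_ofReal_mul_I_re, Complex.exp_ofReal_mul_I_im,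
      zero_mul, mul_zero, sub_zero]
  have hS : (∑' m : ℤ, Real.exp (-c * (m : ℝ) ^ 2) * Real.cos (2 * π * (m : ℝ) * x)) = r := by
    rw [← tsum_congr hre, ← Complex.re_tsum hFsum, hTr, Complex.ofReal_re]
  rw [hS, hr]
  have hsq : 0 < Real.sqrt (c/π) := Real.sqrt_pos.mpr (div_pos hc hπ)
  have htp : 0 < ∑' n, g n :=
    Summable.tsum_pos hgsum (fun n => (Real.exp_pos _).le) 0 (Real.exp_pos _)
  positivity
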